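/- The square roots of the prime numbers are linearly independent over ℚ: for any finite set of distinct primes p₁, ..., pₘ and rationals λ₁, ..., λₘ, if λ₁√p₁ + ... + λₘ√pₘ = 0 then all λᵢ = 0. -/

import Mathlib

open Real

/-- If `u ∉ F` but `u^2 ∈ F`, every element of the subfield generated by `F` and `u`
has the form `a + b * u` with `a, b ∈ F`. -/
lemma quad_repr (F : Subfield ℝ) (u : ℝ) (hu2 : u ^ 2 ∈ F) (hu : u ∉ F)
    (x : ℝ) (hx : x ∈ Subfield.closure (insert u (F : Set ℝ))) :
    ∃ a ∈ F, ∃ b ∈ F, x = a + b * u := by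
  have key : ∀ a b : ℝ, a ∈ F → b ∈ F → a + b * u ≠ 0 →
      ∃ c ∈ F, ∃ d ∈ F, (a + b * u)⁻¹ = c + d * u := by
    intro a b ha hb hne
    have hden : a ^ 2 - u ^ 2 * b ^ 2 ≠ 0 := by
      intro h0
      rcases eq_or_ne b 0 with hb0 | hb0
      · apply hne
        have : a ^ 2 = 0 := by rw [hb0] at h0; simpa using h0
        have ha0 : a = 0 := pow_eq_zero_iff (n := 2) (by norm_num) |>.mp this
        simp [ha0, hb0]
      · have h2 : (a / b - u) * (a / b + u) = 0 := by
          have : (a / b) ^ 2 = u ^ 2 := by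
            field_simp
            nlinarith [h0]
          nlinarith [this]
        rcases mul_eq_zero.mp h2 with h3 | h3
        · exact hu (by have : u = a / b := by linarith
                       rw [this]; exact F.div_mem ha hb)
        · exact hu (by have : u = -(a / b) := by linarith
                       rw [this]; exact F.neg_mem (F.div_mem ha hb))
    refine ⟨a / (a ^ 2 - u ^ 2 * b ^ 2), F.div_mem ha (F.sub_mem (F.pow_mem ha 2)
      (F.mul_mem hu2 (F.pow_mem hb 2))), -b / (a ^ 2 - u ^ 2 * b ^ 2),
      F.div_mem (F.neg_mem hb) (F.sub_mem (F.pow_mem ha 2) (F.mul_mem hu2 (F.pow_mem hb 2))), ?_⟩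
    refine inv_eq_of_mul_eq_one_right ?_
    field_simp
    rw [div_eq_one_iff_eq (by rwa [mul_comm (b ^ 2)])]
    ring
  let T : Subfield ℝ :=
    { carrier := {x | ∃ a ∈ F, ∃ b ∈ F, x = a + b * u}
      zero_mem' := ⟨0, F.zero_mem, 0, F.zero_mem, by ring⟩
      one_mem' := ⟨1, F.one_mem, 0, F.zero_mem, by ring⟩
      add_mem' := by
        rintro x y ⟨a, ha, b, hb, rfl⟩ ⟨c, hc, d, hd, rfl⟩
        exact ⟨a + c, F.add_mem ha hc, b + d, F.add_mem hb hd, by ring⟩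
      neg_mem' := by
        rintro x ⟨a, ha, b, hb, rfl⟩
        exact ⟨-a, F.neg_mem ha, -b, F.neg_mem hb, by ring⟩
      mul_mem' := by
        rintro x y ⟨a, ha, b, hb, rfl⟩ ⟨c, hc, d, hd, rfl⟩
        exact ⟨a * c + b * d * u ^ 2, F.add_mem (F.mul_mem ha hc)
          (F.mul_mem (F.mul_mem hb hd) hu2), a * d + b * c,
          F.add_mem (F.mul_mem ha hd) (F.mul_mem hb hc), by ring⟩
      inv_mem' := by
        rintro x ⟨a, ha, b, hb, rfl⟩
        rcases eq_or_ne (a + b * u) 0 with h0 | h0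
        · exact ⟨0, F.zero_mem, 0, F.zero_mem, by simp [h0]⟩
        · exact key a b ha hb h0 }
  have hsub : Subfield.closure (insert u (F : Set ℝ)) ≤ T := by
    rw [Subfield.closure_le]
    rintro y hy
    rcases hy with rfl | hy
    · exact ⟨0, F.zero_mem, 1, F.one_mem, by ring⟩
    · exact ⟨y, hy, 0, F.zero_mem, by ring⟩
  exact hsub hx

lemma nat_mem_subfield (F : Subfield ℝ) (n : ℕ) : (n : ℝ) ∈ F := by
  have := SubfieldClass.ratCast_mem F (n : ℚ)
  simpa using this

/-- Key lemma: `√d` is not in the field generated by the square roots of a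
finite set of primes, when `d` is squarefree, `> 1`, and not divisible by those primes. -/
lemma sqrt_not_mem (S : Finset ℕ) (hS : ∀ q ∈ S, q.Prime) :
    ∀ d : ℕ, Squarefree d → 1 < d → (∀ q ∈ S, ¬ q ∣ d) →
    Real.sqrt d ∉ Subfield.closure ((fun n : ℕ => Real.sqrt n) '' (S : Set ℕ)) := by
  classical
  induction S using Finset.induction_on with
  | empty =>
    intro d hsf hd1 _ hmem
    simp only [Finset.coe_empty, Set.image_empty, Subfield.closure_empty] at hmem
    have hrat : ∃ q : ℚ, ((q : ℝ) : ℝ) = Real.sqrt d := by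
      have hle : (⊥ : Subfield ℝ) ≤ (Rat.castHom ℝ).fieldRange := bot_le
      exact hle hmem
    have hirr : Irrational (Real.sqrt d) := by
      rw [irrational_sqrt_natCast_iff]
      rintro ⟨k, hk⟩
      have hk1 : k = 1 := Nat.isUnit_iff.mp (hsf k (by rw [hk]))
      subst hk1; simp at hk; omega
    exact hirr ⟨hrat.choose, hrat.choose_spec⟩
  | @insert q S hq ih =>
    have hqp : q.Prime := hS q (Finset.mem_insert_self q S)
    have hSp : ∀ r ∈ S, r.Prime := fun r hr => hS r (Finset.mem_insert_of_mem hr)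
    intro d hsf hd1 hcop hmem
    set F := Subfield.closure ((fun n : ℕ => Real.sqrt n) '' (S : Set ℕ)) with hF
    -- √q ∉ F
    have hqd : ¬ q ∣ d := hcop q (Finset.mem_insert_self q S)
    have hucop : ∀ r ∈ S, ¬ r ∣ q := by
      intro r hr hdvd
      exact hq (((Nat.prime_dvd_prime_iff_eq (hSp r hr) hqp).mp hdvd) ▸ hr)
    have hu : Real.sqrt q ∉ F := ih hSp q hqp.squarefree hqp.one_lt hucop
    have hu2 : (Real.sqrt q) ^ 2 ∈ F := by
      rw [Real.sq_sqrt (by positivity)]; exact nat_mem_subfield F q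
    -- rewrite the closure of the inserted set
    have hmem' : Real.sqrt d ∈ Subfield.closure (insert (Real.sqrt q) (F : Set ℝ)) := by
      apply Subfield.closure_mono (s := (fun n : ℕ => Real.sqrt n) '' ((insert q S : Finset ℕ) : Set ℕ))
      · rw [Finset.coe_insert, Set.image_insert_eq]
        apply Set.insert_subset_insert
        exact fun x hx => Subfield.subset_closure hx
      · exact hmem
    obtain ⟨a, ha, b, hb, heq⟩ := quad_repr F (Real.sqrt q) hu2 hu _ hmem'
    have e1 : Real.sqrt q ^ 2 = q := Real.sq_sqrt (by positivity)
    have e2 : Real.sqrt d ^ 2 = d := Real.sq_sqrt (by positivity)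
    have hsq : (d : ℝ) = a ^ 2 + b ^ 2 * q + 2 * a * b * Real.sqrt q := by
      have h3 : (a + b * Real.sqrt q) ^ 2
          = a ^ 2 + b ^ 2 * (Real.sqrt q ^ 2) + 2 * a * b * Real.sqrt q := by ring
      rw [← e2, heq, h3, e1]
    have ihd : Real.sqrt d ∉ F :=
      ih hSp d hsf hd1 (fun r hr => hcop r (Finset.mem_insert_of_mem hr))
    rcases eq_or_ne b 0 with hb0 | hb0
    · exact ihd (by rw [heq, hb0]; simpa using ha)
    rcases eq_or_ne a 0 with ha0 | ha0
    · -- √d = b √q, so √(dq) = b q ∈ F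
      have hdq : Real.sqrt (d * q : ℕ) = b * q := by
        push_cast
        rw [Real.sqrt_mul (by positivity), heq, ha0]
        rw [zero_add, mul_assoc, Real.mul_self_sqrt (by positivity)]
      have hcopq : Nat.Coprime d q := ((hqp.coprime_iff_not_dvd).mpr hqd).symm
      have hsfdq : Squarefree (d * q) := (Nat.squarefree_mul hcopq).mpr ⟨hsf, hqp.squarefree⟩
      have hgt : 1 < d * q := lt_of_lt_of_le hd1 (Nat.le_mul_of_pos_right d hqp.pos)
      have hcop' : ∀ r ∈ S, ¬ r ∣ d * q := by
        intro r hr hdvd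
        rcases (Nat.Prime.dvd_mul (hSp r hr)).mp hdvd with h' | h'
        · exact hcop r (Finset.mem_insert_of_mem hr) h'
        · exact hucop r hr h'
      exact ih hSp (d * q) hsfdq hgt hcop'
        (by rw [hdq]; exact F.mul_mem hb (nat_mem_subfield F q))
    · -- both nonzero: √q ∈ F, contradiction
      apply hu
      have : Real.sqrt q = ((d : ℝ) - a ^ 2 - b ^ 2 * q) / (2 * a * b) := by
        rw [hsq]; field_simp; ring
      rw [this]
      exact F.div_mem (F.sub_mem (F.sub_mem (nat_mem_subfield F d) (F.pow_mem ha 2))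
        (F.mul_mem (F.pow_mem hb 2) (nat_mem_subfield F q)))
        (F.mul_mem (F.mul_mem (nat_mem_subfield F 2) ha) hb)

theorem stmt_10 (m : ℕ) (p : Fin m → ℕ) (hp : ∀ i, (p i).Prime)
    (hinj : Function.Injective p) (l : Fin m → ℚ)
    (h : ∑ i, (l i : ℝ) * Real.sqrt (p i) = 0) : l = 0 := by
  classical
  by_contra h0
  obtain ⟨j, hj⟩ := Function.ne_iff.mp h0
  have hj' : (l j : ℝ) ≠ 0 := by exact_mod_cast hj
  set S : Finset ℕ := (Finset.univ.erase j).image p with hSdef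
  have hS : ∀ r ∈ S, r.Prime := by
    intro r hr
    obtain ⟨i, _, rfl⟩ := Finset.mem_image.mp hr
    exact hp i
  set K := Subfield.closure ((fun n : ℕ => Real.sqrt n) '' (S : Set ℕ)) with hK
  have hsum : (l j : ℝ) * Real.sqrt (p j)
      = -∑ i ∈ Finset.univ.erase j, (l i : ℝ) * Real.sqrt (p i) := by
    have h2 := Finset.sum_erase_add Finset.univ
      (fun i => (l i : ℝ) * Real.sqrt (p i)) (Finset.mem_univ j)
    rw [h] at h2
    linarith [h2]
  have hmemK : Real.sqrt (p j) ∈ K := by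
    have : Real.sqrt (p j) = (l j : ℝ)⁻¹ *
        (-∑ i ∈ Finset.univ.erase j, (l i : ℝ) * Real.sqrt (p i)) := by
      rw [← hsum]; field_simp
    rw [this]
    refine K.mul_mem (K.inv_mem (SubfieldClass.ratCast_mem K (l j))) (K.neg_mem ?_)
    refine Subfield.sum_mem K ?_
    intro i hi
    refine K.mul_mem (SubfieldClass.ratCast_mem K (l i)) ?_
    exact Subfield.subset_closure ⟨p i, Finset.mem_coe.mpr (Finset.mem_image_of_mem p hi), rfl⟩
  refine sqrt_not_mem S hS (p j) (hp j).squarefree (hp j).one_lt ?_ hmemK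
  intro r hr hdvd
  obtain ⟨i, hi, rfl⟩ := Finset.mem_image.mp hr
  have : p i = p j := (Nat.prime_dvd_prime_iff_eq (hp i) (hp j)).mp hdvd
  exact (Finset.mem_erase.mp hi).1 (hinj this)
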